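/- Let A be a finite dimensional Hopf algebra with subalgebras A₁ (a left coideal) and A₂ (a right coideal) such that multiplication A₁ ⊗ A₂ → A is a linear isomorphism. Then A₁^ε · A₂ (the span of products a₁a₂ with a₁ ∈ A₁ ∩ Ker ε, a₂ ∈ A₂) is a two-sided coideal of A, that is, Δ(A₁^ε A₂) ⊆ A ⊗ (A₁^ε A₂) + (A₁^ε A₂) ⊗ A. -/
import Mathlib


open TensorProduct

noncomputable section

/-- The tensor product of two submodules, as a submodule of the tensor product. -/
def sTen (k : Type*) [CommSemiring k] {A B : Type*} [AddCommMonoid A] [AddCommMonoid B]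
    [Module k A] [Module k B] (p : Submodule k A) (q : Submodule k B) :
    Submodule k (A ⊗[k] B) :=
  LinearMap.range (TensorProduct.map p.subtype q.subtype)

section aux

variable {k : Type*} [CommSemiring k]

lemma sTen_tmul_mem {A B : Type*} [AddCommMonoid A] [AddCommMonoid B] [Module k A] [Module k B]
    {p : Submodule k A} {q : Submodule k B} {m : A} {n : B} (hm : m ∈ p) (hn : n ∈ q) :
    m ⊗ₜ[k] n ∈ sTen k p q :=
  ⟨(⟨m, hm⟩ : p) ⊗ₜ[k] (⟨n, hn⟩ : q), by simp⟩

lemma sTen_induction {A B : Type*} [AddCommMonoid A] [AddCommMonoid B] [Module k A] [Module k B]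
    {p : Submodule k A} {q : Submodule k B} {motive : A ⊗[k] B → Prop}
    (zero : motive 0)
    (tmul : ∀ m ∈ p, ∀ n ∈ q, motive (m ⊗ₜ[k] n))
    (add : ∀ x y, motive x → motive y → motive (x + y))
    {x : A ⊗[k] B} (hx : x ∈ sTen k p q) : motive x := by
  obtain ⟨t, rfl⟩ := hx
  induction t with
  | zero => simpa using zero
  | tmul m n => simpa using tmul m m.2 n n.2
  | add a b ha hb => simpa using add _ _ ha hb

lemma sTen_mono {A B : Type*} [AddCommMonoid A] [AddCommMonoid B] [Module k A] [Module k B]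
    {p p' : Submodule k A} {q q' : Submodule k B} (hp : p ≤ p') (hq : q ≤ q') :
    sTen k p q ≤ sTen k p' q' := by
  intro x hx
  refine sTen_induction (motive := fun x => x ∈ sTen k p' q') ?_ ?_ ?_ hx
  · exact Submodule.zero_mem _
  · intro m hm n hn
    exact sTen_tmul_mem (hp hm) (hq hn)
  · intro x y hx hy
    exact Submodule.add_mem _ hx hy

lemma sTen_map {A B A' B' : Type*} [AddCommMonoid A] [AddCommMonoid B] [AddCommMonoid A']
    [AddCommMonoid B'] [Module k A] [Module k B] [Module k A'] [Module k B']
    {p : Submodule k A} {q : Submodule k B} {p' : Submodule k A'} {q' : Submodule k B'}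
    {f : A →ₗ[k] A'} {g : B →ₗ[k] B'} (hf : ∀ m ∈ p, f m ∈ p') (hg : ∀ n ∈ q, g n ∈ q')
    {x : A ⊗[k] B} (hx : x ∈ sTen k p q) : TensorProduct.map f g x ∈ sTen k p' q' := by
  refine sTen_induction (motive := fun x => TensorProduct.map f g x ∈ sTen k p' q') ?_ ?_ ?_ hx
  · simpa using Submodule.zero_mem _
  · intro m hm n hn
    rw [TensorProduct.map_tmul]
    exact sTen_tmul_mem (hf m hm) (hg n hn)
  · intro x y hx hy
    rw [map_add]
    exact Submodule.add_mem _ hx hy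

lemma sTen_mul {A B : Type*} [Ring A] [Ring B] [Algebra k A] [Algebra k B]
    {p r : Submodule k A} {q s : Submodule k B} {x y : A ⊗[k] B}
    (hx : x ∈ sTen k p q) (hy : y ∈ sTen k r s) : x * y ∈ sTen k (p * r) (q * s) := by
  refine sTen_induction (motive := fun x => x * y ∈ sTen k (p * r) (q * s)) ?_ ?_ ?_ hx
  · simpa using Submodule.zero_mem _
  · intro m hm n hn
    refine sTen_induction (motive := fun y => m ⊗ₜ[k] n * y ∈ sTen k (p * r) (q * s)) ?_ ?_ ?_ hy
    · simpa using Submodule.zero_mem _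
    · intro a ha b hb
      rw [Algebra.TensorProduct.tmul_mul_tmul]
      exact sTen_tmul_mem (Submodule.mul_mem_mul hm ha) (Submodule.mul_mem_mul hn hb)
    · intro u v hu hv
      rw [mul_add]
      exact Submodule.add_mem _ hu hv
  · intro u v hu hv
    rw [add_mul]
    exact Submodule.add_mem _ hu hv

end aux

/-- with `A` a finite dimensional Hopf algebra, `A₁` a left coideal
subalgebra, `A₂` a right coideal subalgebra, and multiplication `A₁ ⊗ A₂ → A` a
linear isomorphism, the subspace `A₁^ε · A₂` is a two-sided coideal of `A`:
`Δ(A₁^ε A₂) ⊆ A ⊗ (A₁^ε A₂) + (A₁^ε A₂) ⊗ A`. -/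
theorem stmt2 (k A : Type*) [Field k] [Ring A] [HopfAlgebra k A] [FiniteDimensional k A]
    (A₁ A₂ : Subalgebra k A)
    (hiso : Function.Bijective
      ((LinearMap.mul' k A).comp
        (TensorProduct.map (Subalgebra.toSubmodule A₁).subtype
          (Subalgebra.toSubmodule A₂).subtype)))
    (hA₁ : ∀ x ∈ A₁, Coalgebra.comul (R := k) x ∈ sTen k ⊤ (Subalgebra.toSubmodule A₁))
    (hA₂ : ∀ x ∈ A₂, Coalgebra.comul (R := k) x ∈ sTen k (Subalgebra.toSubmodule A₂) ⊤) :
    ∀ x ∈ ((Subalgebra.toSubmodule A₁ ⊓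
          LinearMap.ker (Coalgebra.counit (R := k) (A := A))) *
        Subalgebra.toSubmodule A₂),
      Coalgebra.comul (R := k) x ∈
        sTen k ⊤ ((Subalgebra.toSubmodule A₁ ⊓
            LinearMap.ker (Coalgebra.counit (R := k) (A := A))) *
              Subalgebra.toSubmodule A₂)
        ⊔ sTen k ((Subalgebra.toSubmodule A₁ ⊓
            LinearMap.ker (Coalgebra.counit (R := k) (A := A))) *
              Subalgebra.toSubmodule A₂) ⊤ := by
  set M₁ := Subalgebra.toSubmodule A₁ with hM₁
  set M₂ := Subalgebra.toSubmodule A₂ with hM₂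
  set E := M₁ ⊓ LinearMap.ker (Coalgebra.counit (R := k) (A := A)) with hE
  -- Step 1 : A₁ A₂ = A
  have hAtop : M₁ * M₂ = ⊤ := by
    rw [eq_top_iff]
    intro x _
    obtain ⟨t, ht⟩ := hiso.2 x
    rw [← ht]
    clear ht
    induction t with
    | zero => simpa using Submodule.zero_mem _
    | tmul m n =>
        simpa [LinearMap.mul'_apply] using Submodule.mul_mem_mul m.2 n.2
    | add a b ha hb =>
        rw [map_add]
        exact Submodule.add_mem _ ha hb
  -- Step 2 : E * ⊤ = E * M₂
  have hEA₁ : E * M₁ ≤ E := by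
    rw [Submodule.mul_le]
    intro e he m hm
    refine ⟨(Subalgebra.mem_toSubmodule _).mpr
      (mul_mem ((Subalgebra.mem_toSubmodule _).mp he.1) ((Subalgebra.mem_toSubmodule _).mp hm)), ?_⟩
    have he2 : Coalgebra.counit (R := k) e = 0 := he.2
    simp [LinearMap.mem_ker, Bialgebra.counit_mul, he2]
  have hItop : E * (⊤ : Submodule k A) = E * M₂ := by
    apply le_antisymm
    · rw [← hAtop, ← mul_assoc]
      exact mul_le_mul' hEA₁ le_rfl
    · exact mul_le_mul' le_rfl le_top
  -- Step 3 : for a ∈ A₁, Δ a - a ⊗ 1 ∈ A ⊗ E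
  have hdec : ∀ a ∈ A₁, Coalgebra.comul (R := k) a - a ⊗ₜ[k] (1 : A) ∈ sTen k ⊤ E := by
    intro a ha
    set P : A →ₗ[k] A :=
      LinearMap.id - (Algebra.linearMap k A) ∘ₗ (Coalgebra.counit (R := k) (A := A)) with hP
    have hPE : ∀ n ∈ M₁, P n ∈ E := by
      intro n hn
      refine ⟨?_, ?_⟩
      · simp only [hP, LinearMap.sub_apply, LinearMap.id_apply, LinearMap.coe_comp,
          Function.comp_apply, Algebra.linearMap_apply]
        exact sub_mem hn (A₁.algebraMap_mem _)
      · simp [hP, LinearMap.mem_ker]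
    have hmem : TensorProduct.map LinearMap.id P (Coalgebra.comul (R := k) a) ∈ sTen k ⊤ E :=
      sTen_map (fun m _ => Submodule.mem_top) hPE (hA₁ a ha)
    have heq : TensorProduct.map LinearMap.id P (Coalgebra.comul (R := k) a)
        = Coalgebra.comul (R := k) a - a ⊗ₜ[k] (1 : A) := by
      have h0 : TensorProduct.map (LinearMap.id : A →ₗ[k] A) P = LinearMap.lTensor A P := rfl
      rw [h0, hP, LinearMap.lTensor_sub, LinearMap.sub_apply, LinearMap.lTensor_id,
        LinearMap.id_apply, LinearMap.lTensor_comp, LinearMap.comp_apply,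
        Coalgebra.lTensor_counit_comul]
      simp
    rwa [heq] at hmem
  -- Main argument
  intro x hx
  refine Submodule.mul_induction_on hx ?_ ?_
  · intro e he m hm
    have he1 : e ∈ A₁ := he.1
    have hm' : m ∈ A₂ := hm
    rw [Bialgebra.comul_mul]
    have hsplit : Coalgebra.comul (R := k) e * Coalgebra.comul (R := k) m
        = (Coalgebra.comul (R := k) e - e ⊗ₜ[k] (1 : A)) * Coalgebra.comul (R := k) m
          + (e ⊗ₜ[k] (1 : A)) * Coalgebra.comul (R := k) m := by
      rw [sub_mul, sub_add_cancel]
    rw [hsplit]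
    refine Submodule.add_mem _ ?_ ?_
    · refine Submodule.mem_sup_left ?_
      have h1 := sTen_mul (sTen_mono le_rfl le_rfl (hdec e he1)) (hA₂ m hm')
      exact sTen_mono le_top hItop.le h1
    · refine Submodule.mem_sup_right ?_
      have h2 := sTen_mul (sTen_tmul_mem (n := (1 : A)) he Submodule.mem_top) (hA₂ m hm')
      exact sTen_mono le_rfl le_top h2
  · intro u v hu hv
    rw [map_add]
    exact Submodule.add_mem _ hu hv
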